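/- Let u : ℝ → ℝ be twice continuously differentiable on (0,∞) with u'(c) > 0 for all c > 0, and suppose u is scale-free: for every r > 0 there exist C(r) ∈ ℝ and D(r) > 0 such that u(r·c) = C(r) + D(r)·u(c) for all c > 0. Then u is isoelastic up to positive affine transformation: either there exist A ∈ ℝ and B > 0 with u(c) = A + B·log(c) for all c > 0, or there exist a real γ ≠ 1, A ∈ ℝ and B > 0 with u(c) = A + B·(c^{1−γ} − 1)/(1−γ) for all c > 0. -/

import Mathlib

/-- If a function has derivative `0` at every point of `(0,∞)`, it is constant there. -/
lemma stmt_15_const_aux {f : ℝ → ℝ} (h : ∀ x ∈ Set.Ioi (0:ℝ), HasDerivAt f 0 x)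
    {x y : ℝ} (hx : x ∈ Set.Ioi (0:ℝ)) (hy : y ∈ Set.Ioi (0:ℝ)) : f x = f y := by
  refine (convex_Ioi (0:ℝ)).is_const_of_fderivWithin_eq_zero
    (fun z hz => ((h z hz).differentiableAt).differentiableWithinAt) (fun z hz => ?_) hx hy
  rw [fderivWithin_of_isOpen isOpen_Ioi hz, (h z hz).hasFDerivAt.fderiv]
  ext
  simp

/-- Every scale-free, twice continuously differentiable utility function on `(0,∞)` with
strictly positive marginal utility is, up to a positive affine transformation, either the
logarithmic utility or an isoelastic utility `(c^{1−γ}−1)/(1−γ)` for some `γ ≠ 1`. -/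
theorem stmt_15 (u : ℝ → ℝ)
    (hsmooth : ContDiffOn ℝ 2 u (Set.Ioi (0:ℝ)))
    (hmono : ∀ c : ℝ, 0 < c → 0 < deriv u c)
    (hscale : ∀ r : ℝ, 0 < r → ∃ C : ℝ, ∃ D : ℝ, 0 < D ∧
      ∀ c : ℝ, 0 < c → u (r * c) = C + D * u c) :
    (∃ A : ℝ, ∃ B : ℝ, 0 < B ∧ ∀ c : ℝ, 0 < c → u c = A + B * Real.log c) ∨
    (∃ γ : ℝ, γ ≠ 1 ∧ ∃ A : ℝ, ∃ B : ℝ, 0 < B ∧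
      ∀ c : ℝ, 0 < c → u c = A + B * ((c ^ (1 - γ) - 1) / (1 - γ))) := by
  have hdiff : ∀ c : ℝ, 0 < c → DifferentiableAt ℝ u c := fun c hc =>
    (hsmooth.differentiableOn (by norm_num)).differentiableAt (isOpen_Ioi.mem_nhds hc)
  have hcd : ContinuousOn (deriv u) (Set.Ioi 0) :=
    hsmooth.continuousOn_deriv_of_isOpen isOpen_Ioi (by norm_num)
  have hu1 : 0 < deriv u 1 := hmono 1 one_pos
  -- differentiate the scale relation
  have hder : ∀ r : ℝ, 0 < r → ∀ c : ℝ, 0 < c →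
      deriv u 1 * (deriv u (r * c) * r) = (deriv u r * r) * deriv u c := by
    intro r hr
    obtain ⟨C, D, hD, hCD⟩ := hscale r hr
    have main : ∀ c : ℝ, 0 < c → deriv u (r * c) * r = D * deriv u c := by
      intro c hc
      have hrc : 0 < r * c := mul_pos hr hc
      have h1 : HasDerivAt (fun x => u (r * x)) (deriv u (r * c) * r) c := by
        have hmul : HasDerivAt (fun x : ℝ => r * x) r c := by
          simpa using (hasDerivAt_id c).const_mul r
        exact (hdiff (r * c) hrc).hasDerivAt.comp c hmul
      have h2 : HasDerivAt (fun x => C + D * u x) (D * deriv u c) c :=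
        ((hdiff c hc).hasDerivAt.const_mul D).const_add C
      have heq : (fun x => C + D * u x) =ᶠ[nhds c] fun x => u (r * x) := by
        filter_upwards [isOpen_Ioi.mem_nhds hc] with x hx
        exact (hCD x hx).symm
      exact ((h2.congr_of_eventuallyEq heq.symm).unique h1).symm
    intro c hc
    have h1 := main c hc
    have h2 := main 1 one_pos
    rw [mul_one] at h2
    calc deriv u 1 * (deriv u (r * c) * r) = deriv u 1 * (D * deriv u c) := by rw [h1]
      _ = (D * deriv u 1) * deriv u c := by ring
      _ = (deriv u r * r) * deriv u c := by rw [← h2]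
  -- the function w c = c * u'(c) / u'(1) is multiplicative on (0,∞)
  set w : ℝ → ℝ := fun c => c * deriv u c / deriv u 1 with hw
  have hwpos : ∀ c : ℝ, 0 < c → 0 < w c := fun c hc =>
    div_pos (mul_pos hc (hmono c hc)) hu1
  have hwmul : ∀ x : ℝ, 0 < x → ∀ y : ℝ, 0 < y → w (x * y) = w x * w y := by
    intro x hx y hy
    have h := hder x hx y hy
    have h1 : deriv u 1 ≠ 0 := ne_of_gt hu1
    simp only [hw]
    rw [div_mul_div_comm, div_eq_div_iff h1 (mul_ne_zero h1 h1)]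
    linear_combination (y * deriv u 1) * h
  have hw1 : w 1 = 1 := by simp [hw, ne_of_gt hu1]
  -- Cauchy functional equation
  set g : ℝ → ℝ := fun t => Real.log (w (Real.exp t)) with hg
  have hgadd : ∀ s t : ℝ, g (s + t) = g s + g t := by
    intro s t
    have : w (Real.exp (s + t)) = w (Real.exp s) * w (Real.exp t) := by
      rw [Real.exp_add]
      exact hwmul _ (Real.exp_pos s) _ (Real.exp_pos t)
    rw [hg]
    simp only
    rw [this, Real.log_mul (ne_of_gt (hwpos _ (Real.exp_pos s)))
      (ne_of_gt (hwpos _ (Real.exp_pos t)))]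
  have hgcont : Continuous g := by
    have hv : ContinuousOn (fun c : ℝ => c * deriv u c / deriv u 1) (Set.Ioi 0) :=
      (continuousOn_id.mul hcd).div_const _
    have h1 : Continuous fun t : ℝ => w (Real.exp t) :=
      hv.comp_continuous Real.continuous_exp (fun x => Real.exp_pos x)
    exact h1.log (fun t => ne_of_gt (hwpos _ (Real.exp_pos t)))
  -- continuous additive map is linear
  have hglin : ∀ t : ℝ, g t = t * g 1 := by
    intro t
    have := map_real_smul (AddMonoidHom.mk' g hgadd) hgcont t 1
    simpa [smul_eq_mul] using this
  set k : ℝ := g 1 with hk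
  -- w c = c ^ k on (0,∞)
  have hwpow : ∀ c : ℝ, 0 < c → w c = c ^ k := by
    intro c hc
    have h1 : g (Real.log c) = Real.log (w c) := by
      rw [hg]; simp only; rw [Real.exp_log hc]
    have h2 : Real.log (w c) = Real.log c * k := by rw [← h1, hglin]
    rw [Real.rpow_def_of_pos hc, ← h2, Real.exp_log (hwpos c hc)]
  -- hence u'(c) = u'(1) * c^k / c
  have hderiv_eq : ∀ c : ℝ, 0 < c → deriv u c = deriv u 1 * c ^ k / c := by
    intro c hc
    have := hwpow c hc
    rw [hw] at this
    simp only at this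
    field_simp at this ⊢
    nlinarith [this]
  by_cases hk0 : k = 0
  · -- logarithmic case
    left
    refine ⟨u 1, deriv u 1, hu1, fun c hc => ?_⟩
    have key : ∀ x ∈ Set.Ioi (0:ℝ),
        HasDerivAt (fun c => u c - deriv u 1 * Real.log c) 0 x := by
      intro x hx
      have hx0 : (0:ℝ) < x := hx
      have h1 : HasDerivAt u (deriv u x) x := (hdiff x hx0).hasDerivAt
      have h2 : HasDerivAt (fun c => deriv u 1 * Real.log c) (deriv u 1 * x⁻¹) x :=
        (Real.hasDerivAt_log (ne_of_gt hx0)).const_mul _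
      have := h1.sub h2
      refine this.congr_deriv ?_
      symm
      rw [hderiv_eq x hx0, hk0]
      rw [Real.rpow_zero]
      field_simp
      ring
    have := stmt_15_const_aux key (Set.mem_Ioi.mpr hc) (Set.mem_Ioi.mpr one_pos)
    simp only [Real.log_one, mul_zero, sub_zero] at this
    linarith
  · -- isoelastic case
    right
    refine ⟨1 - k, by intro h; apply hk0; linarith [h], u 1, deriv u 1, hu1, fun c hc => ?_⟩
    have h1k : (1:ℝ) - (1 - k) = k := by ring
    rw [h1k]
    have key : ∀ x ∈ Set.Ioi (0:ℝ),
        HasDerivAt (fun c => u c - deriv u 1 * ((c ^ k - 1) / k)) 0 x := by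
      intro x hx
      have hx0 : (0:ℝ) < x := hx
      have h1 : HasDerivAt u (deriv u x) x := (hdiff x hx0).hasDerivAt
      have hpow : HasDerivAt (fun c : ℝ => c ^ k) (k * x ^ (k - 1)) x :=
        Real.hasDerivAt_rpow_const (Or.inl (ne_of_gt hx0))
      have h2 : HasDerivAt (fun c : ℝ => deriv u 1 * ((c ^ k - 1) / k))
          (deriv u 1 * ((k * x ^ (k - 1)) / k)) x :=
        (((hpow.sub_const 1).div_const k).const_mul _)
      have := h1.sub h2
      refine this.congr_deriv ?_
      symm
      rw [hderiv_eq x hx0]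
      have hxk : x ^ (k - 1) = x ^ k / x := by
        rw [Real.rpow_sub hx0, Real.rpow_one]
      rw [hxk]
      field_simp
      ring
    have := stmt_15_const_aux key (Set.mem_Ioi.mpr hc) (Set.mem_Ioi.mpr one_pos)
    simp only [Real.rpow_one, Real.one_rpow, sub_self, zero_div, mul_zero, sub_zero] at this
    linarith
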